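/- For every positive integer n there exists a set S of permutations of [n] = {1,…,n} such that any two distinct permutations in S are locally parallel and 6^n · |S| ≥ n!. -/

import Mathlib

/-- Two permutations `σ` and `τ` of `[n]` are *locally parallel* if there exist
distinct elements `a, b` with `σ⁻¹(a) < σ⁻¹(b)`, `τ⁻¹(b) < τ⁻¹(a)`, and the position
intervals `[σ⁻¹(a), σ⁻¹(b)]` and `[τ⁻¹(b), τ⁻¹(a)]` disjoint. -/
def LocallyParallel {n : ℕ} (σ τ : Equiv.Perm (Fin n)) : Prop :=
  ∃ a b : Fin n, a ≠ b ∧ σ⁻¹ a < σ⁻¹ b ∧ τ⁻¹ b < τ⁻¹ a ∧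
    Set.Icc (σ⁻¹ a) (σ⁻¹ b) ∩ Set.Icc (τ⁻¹ b) (τ⁻¹ a) = ∅

theorem Equiv.Perm.inv_apply_self {α : Type*} (f : Equiv.Perm α) (x : α) : f⁻¹ (f x) = x :=
  f.symm_apply_apply x

theorem Equiv.Perm.apply_inv_self {α : Type*} (f : Equiv.Perm α) (x : α) : f (f⁻¹ x) = x :=
  f.apply_symm_apply x

namespace LPAux

variable {n : ℕ}

/-- The key combinatorial property of a "quotient" permutation. -/
def Q (π : Equiv.Perm (Fin n)) : Prop :=
  ∃ p q : Fin n, p < q ∧ π q < π p ∧ (π p < p ∨ q < π q)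

lemma lp_of_Q {σ τ : Equiv.Perm (Fin n)} (h : Q (τ⁻¹ * σ)) : LocallyParallel σ τ := by
  obtain ⟨p, q, hpq, hlt, hor⟩ := h
  simp only [Equiv.Perm.mul_apply] at hlt hor
  refine ⟨σ p, σ q, fun hab => absurd (σ.injective hab) hpq.ne, ?_, ?_, ?_⟩
  · rw [Equiv.Perm.inv_apply_self, Equiv.Perm.inv_apply_self]; exact hpq
  · exact hlt
  · rw [Equiv.Perm.inv_apply_self, Equiv.Perm.inv_apply_self]
    apply Set.eq_empty_iff_forall_notMem.mpr
    rintro x ⟨hx1, hx2⟩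
    rw [Set.mem_Icc] at hx1 hx2
    rcases hor with hor | hor
    · exact absurd ((hx1.1.trans hx2.2).trans_lt hor) (lt_irrefl p)
    · exact absurd ((hx2.1.trans hx1.2).trans_lt hor) (lt_irrefl _)

lemma lp_symm {σ τ : Equiv.Perm (Fin n)} (h : LocallyParallel σ τ) : LocallyParallel τ σ := by
  obtain ⟨a, b, hne, h1, h2, h3⟩ := h
  exact ⟨b, a, hne.symm, h2, h1, by rw [Set.inter_comm]; exact h3⟩

lemma lp_irrefl (σ : Equiv.Perm (Fin n)) : ¬ LocallyParallel σ σ := by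
  rintro ⟨a, b, _, h1, h2, _⟩
  exact absurd (h1.trans h2) (lt_irrefl _)

lemma M1 {π : Equiv.Perm (Fin n)} (hbad : ¬ Q π) {p q : Fin n}
    (hp : π p < p) (hpq : p < q) : π p < π q := by
  rcases lt_trichotomy (π q) (π p) with h | h | h
  · exact absurd ⟨p, q, hpq, h, Or.inl hp⟩ hbad
  · exact absurd (π.injective h) hpq.ne'
  · exact h

lemma M2 {π : Equiv.Perm (Fin n)} (hbad : ¬ Q π) {p q : Fin n}
    (hq : q < π q) (hpq : p < q) : π p < π q := by
  rcases lt_trichotomy (π q) (π p) with h | h | h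
  · exact absurd ⟨p, q, hpq, h, Or.inr hq⟩ hbad
  · exact absurd (π.injective h) hpq.ne'
  · exact h

lemma rank_unique {P : Fin n → Prop} [DecidablePred P] {u v : Fin n} (hu : P u) (hv : P v)
    (h : (Finset.univ.filter fun w => P w ∧ w ≤ u).card
        = (Finset.univ.filter fun w => P w ∧ w ≤ v).card) : u = v := by
  have key : ∀ {a b : Fin n}, P a → P b → a < b →
      (Finset.univ.filter fun w => P w ∧ w ≤ a).card
        < (Finset.univ.filter fun w => P w ∧ w ≤ b).card := by
    intro a b _ hb hab
    apply Finset.card_lt_card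
    rw [Finset.ssubset_iff_of_subset]
    · exact ⟨b, by simp [hb], by simp [hab.not_ge]⟩
    · intro w hw
      simp only [Finset.mem_filter, Finset.mem_univ, true_and] at hw ⊢
      exact ⟨hw.1, hw.2.trans hab.le⟩
  by_contra hne
  rcases Ne.lt_or_gt hne with hlt | hlt
  · have := key hu hv hlt; omega
  · have := key hv hu hlt; omega

lemma low_image {π : Equiv.Perm (Fin n)} (hbad : ¬ Q π) {p : Fin n} (hp : π p < p) :
    (Finset.univ.filter fun q => π q < q ∧ q ≤ p).image π
      = Finset.univ.filter fun w => w < π⁻¹ w ∧ w ≤ π p := by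
  ext w
  simp only [Finset.mem_image, Finset.mem_filter, Finset.mem_univ, true_and]
  constructor
  · rintro ⟨q, ⟨hq1, hq2⟩, rfl⟩
    refine ⟨by rwa [Equiv.Perm.inv_apply_self], ?_⟩
    rcases hq2.lt_or_eq with h | h
    · exact (M1 hbad hq1 h).le
    · rw [h]
  · rintro ⟨hw1, hw2⟩
    refine ⟨π⁻¹ w, ⟨?_, ?_⟩, Equiv.Perm.apply_inv_self π w⟩
    · rwa [Equiv.Perm.apply_inv_self]
    · by_contra hc
      push_neg at hc
      have := M1 hbad hp hc
      rw [Equiv.Perm.apply_inv_self] at this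
      exact absurd hw2 (not_le.mpr this)

lemma high_image {π : Equiv.Perm (Fin n)} (hbad : ¬ Q π) {p : Fin n} (hp : p < π p) :
    (Finset.univ.filter fun q => q < π q ∧ q ≤ p).image π
      = Finset.univ.filter fun w => π⁻¹ w < w ∧ w ≤ π p := by
  ext w
  simp only [Finset.mem_image, Finset.mem_filter, Finset.mem_univ, true_and]
  constructor
  · rintro ⟨q, ⟨hq1, hq2⟩, rfl⟩
    refine ⟨by rwa [Equiv.Perm.inv_apply_self], ?_⟩
    rcases hq2.lt_or_eq with h | h
    · exact (M2 hbad hp h).le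
    · rw [h]
  · rintro ⟨hw1, hw2⟩
    refine ⟨π⁻¹ w, ⟨?_, ?_⟩, Equiv.Perm.apply_inv_self π w⟩
    · rwa [Equiv.Perm.apply_inv_self]
    · by_contra hc
      push_neg at hc
      have hq : π⁻¹ w < π (π⁻¹ w) := by rwa [Equiv.Perm.apply_inv_self]
      have := M2 hbad hq hc
      rw [Equiv.Perm.apply_inv_self] at this
      exact absurd hw2 (not_le.mpr this)

def ord2fin : Ordering → Fin 3
  | .lt => 0
  | .eq => 1
  | .gt => 2

lemma ord2fin_inj : Function.Injective ord2fin := by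
  intro a b h
  cases a <;> cases b <;> first | rfl | exact absurd h (by decide)

/-- The fingerprint of a permutation. -/
def φ (π : Equiv.Perm (Fin n)) : Fin n → Fin 3 × Bool :=
  fun p => (ord2fin (cmp (π p) p), decide (π⁻¹ p < p))

lemma phi_injOn {π ρ : Equiv.Perm (Fin n)} (hπ : ¬ Q π) (hρ : ¬ Q ρ)
    (hfeq : φ π = φ ρ) : π = ρ := by
  have hcmp : ∀ p, cmp (π p) p = cmp (ρ p) p :=
    fun p => ord2fin_inj (congrArg Prod.fst (congrFun hfeq p))
  have hlt : ∀ p, π p < p ↔ ρ p < p := by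
    intro p
    rw [← cmp_eq_lt_iff, ← cmp_eq_lt_iff, hcmp p]
  have heq : ∀ p, π p = p ↔ ρ p = p := by
    intro p
    constructor
    · intro h
      exact (cmp_eq_eq_iff (ρ p) p).mp (by rw [← hcmp p]; exact (cmp_eq_eq_iff (π p) p).mpr h)
    · intro h
      exact (cmp_eq_eq_iff (π p) p).mp (by rw [hcmp p]; exact (cmp_eq_eq_iff (ρ p) p).mpr h)
  have hgt : ∀ p, p < π p ↔ p < ρ p := by
    intro p
    rw [← cmp_eq_gt_iff, ← cmp_eq_gt_iff, hcmp p]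
  have hinvlt : ∀ p, π⁻¹ p < p ↔ ρ⁻¹ p < p :=
    fun p => decide_eq_decide.mp (congrArg Prod.snd (congrFun hfeq p))
  have hinveq : ∀ p, π⁻¹ p = p ↔ ρ⁻¹ p = p := by
    intro p
    constructor
    · intro h
      have : π p = p := by conv_lhs => rw [← h, Equiv.Perm.apply_inv_self]
      have h2 : ρ p = p := (heq p).mp this
      conv_lhs => rw [← h2, Equiv.Perm.inv_apply_self]
    · intro h
      have : ρ p = p := by conv_lhs => rw [← h, Equiv.Perm.apply_inv_self]
      have h2 : π p = p := (heq p).mpr this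
      conv_lhs => rw [← h2, Equiv.Perm.inv_apply_self]
  have hinvgt : ∀ p, p < π⁻¹ p ↔ p < ρ⁻¹ p := by
    intro p
    rw [← not_le, ← not_le]
    apply not_congr
    rw [le_iff_lt_or_eq, le_iff_lt_or_eq]
    exact or_congr (hinvlt p) (hinveq p)
  apply Equiv.ext
  intro p
  rcases lt_trichotomy (π p) p with hc | hc | hc
  · -- low case
    have hρp : ρ p < p := (hlt p).mp hc
    have hA : (Finset.univ.filter fun q => π q < q ∧ q ≤ p)
        = (Finset.univ.filter fun q => ρ q < q ∧ q ≤ p) :=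
      Finset.filter_congr (fun q _ => by rw [hlt q])
    have hC : ∀ u : Fin n, (Finset.univ.filter fun w => w < π⁻¹ w ∧ w ≤ u)
        = (Finset.univ.filter fun w => w < ρ⁻¹ w ∧ w ≤ u) :=
      fun u => Finset.filter_congr (fun w _ => by rw [hinvgt w])
    have c1 : (Finset.univ.filter fun w => w < π⁻¹ w ∧ w ≤ π p).card
        = (Finset.univ.filter fun q => π q < q ∧ q ≤ p).card := by
      rw [← low_image hπ hc, Finset.card_image_of_injective _ π.injective]
    have c2 : (Finset.univ.filter fun w => w < ρ⁻¹ w ∧ w ≤ ρ p).card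
        = (Finset.univ.filter fun q => ρ q < q ∧ q ≤ p).card := by
      rw [← low_image hρ hρp, Finset.card_image_of_injective _ ρ.injective]
    refine rank_unique (P := fun w => w < π⁻¹ w) ?_ ?_ ?_
    · show π p < π⁻¹ (π p)
      rw [Equiv.Perm.inv_apply_self]; exact hc
    · show ρ p < π⁻¹ (ρ p)
      rw [hinvgt (ρ p), Equiv.Perm.inv_apply_self]; exact hρp
    · rw [c1, hC (ρ p), c2, hA]
  · -- fixed case
    rw [hc, ((heq p).mp hc)]
  · -- high case
    have hρp : p < ρ p := (hgt p).mp hc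
    have hA : (Finset.univ.filter fun q => q < π q ∧ q ≤ p)
        = (Finset.univ.filter fun q => q < ρ q ∧ q ≤ p) :=
      Finset.filter_congr (fun q _ => by rw [hgt q])
    have hC : ∀ u : Fin n, (Finset.univ.filter fun w => π⁻¹ w < w ∧ w ≤ u)
        = (Finset.univ.filter fun w => ρ⁻¹ w < w ∧ w ≤ u) :=
      fun u => Finset.filter_congr (fun w _ => by rw [hinvlt w])
    have c1 : (Finset.univ.filter fun w => π⁻¹ w < w ∧ w ≤ π p).card
        = (Finset.univ.filter fun q => q < π q ∧ q ≤ p).card := by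
      rw [← high_image hπ hc, Finset.card_image_of_injective _ π.injective]
    have c2 : (Finset.univ.filter fun w => ρ⁻¹ w < w ∧ w ≤ ρ p).card
        = (Finset.univ.filter fun q => q < ρ q ∧ q ≤ p).card := by
      rw [← high_image hρ hρp, Finset.card_image_of_injective _ ρ.injective]
    refine rank_unique (P := fun w => π⁻¹ w < w) ?_ ?_ ?_
    · show π⁻¹ (π p) < π p
      rw [Equiv.Perm.inv_apply_self]; exact hc
    · show π⁻¹ (ρ p) < ρ p
      rw [hinvlt (ρ p), Equiv.Perm.inv_apply_self]; exact hρp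
    · rw [c1, hC (ρ p), c2, hA]

open scoped Classical in
noncomputable def Bad (n : ℕ) : Finset (Equiv.Perm (Fin n)) :=
  Finset.univ.filter (fun π => ¬ Q π)

lemma mem_Bad {π : Equiv.Perm (Fin n)} : π ∈ Bad n ↔ ¬ Q π := by
  classical
  simp [Bad]

lemma bad_card : (Bad n).card ≤ 6 ^ n := by
  classical
  have h := Finset.card_le_card_of_injOn (φ (n := n))
      (fun x _ => Finset.mem_univ (φ x))
      (fun π hπ ρ hρ hfeq => phi_injOn (mem_Bad.mp hπ) (mem_Bad.mp hρ) hfeq)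
  calc (Bad n).card ≤ (Finset.univ : Finset (Fin n → Fin 3 × Bool)).card := h
    _ = 6 ^ n := by
        rw [Finset.card_univ, Fintype.card_fun]
        simp

lemma greedy : ∀ (k : ℕ) (V : Finset (Equiv.Perm (Fin n))), V.card ≤ k →
    ∃ S : Finset (Equiv.Perm (Fin n)), ↑S ⊆ V ∧
      (∀ σ ∈ S, ∀ τ ∈ S, σ ≠ τ → LocallyParallel σ τ) ∧
      V.card ≤ (Bad n).card * S.card := by
  classical
  intro k
  induction k with
  | zero =>
    intro V hV
    exact ⟨∅, by simp, by simp, by simpa using hV⟩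
  | succ k ih =>
    intro V hV
    rcases V.eq_empty_or_nonempty with rfl | ⟨σ, hσ⟩
    · exact ⟨∅, by simp, by simp, by simp⟩
    · set V' := V.filter (fun τ => LocallyParallel σ τ) with hV'
      have hσnot : σ ∉ V' := by
        simp only [hV', Finset.mem_filter]
        exact fun h => absurd h.2 (lp_irrefl σ)
      have hss : V' ⊂ V := ⟨Finset.filter_subset _ _, fun h => hσnot (h hσ)⟩
      have hVcard : V'.card ≤ k := by
        have := Finset.card_lt_card hss
        omega
      obtain ⟨S', hS'sub, hS'pair, hS'card⟩ := ih V' hVcard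
      have hσS' : σ ∉ S' := fun h => hσnot (hS'sub h)
      refine ⟨insert σ S', ?_, ?_, ?_⟩
      · intro x hx
        rcases Finset.mem_insert.mp hx with rfl | hx
        · exact hσ
        · exact Finset.filter_subset _ _ (hS'sub hx)
      · intro a ha b hb hab
        rcases Finset.mem_insert.mp ha with ha' | ha'
        · rcases Finset.mem_insert.mp hb with hb' | hb'
          · exact absurd (ha'.trans hb'.symm) hab
          · subst ha'
            exact (Finset.mem_filter.mp (hS'sub hb')).2
        · rcases Finset.mem_insert.mp hb with hb' | hb'
          · subst hb'
            exact lp_symm (Finset.mem_filter.mp (hS'sub ha')).2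
          · exact hS'pair a ha' b hb' hab
      · -- cardinality
        have hsplit : (V.filter (fun τ => LocallyParallel σ τ)).card
            + (V.filter (fun τ => ¬ LocallyParallel σ τ)).card = V.card :=
          Finset.card_filter_add_card_filter_not _
        have hN : (V.filter (fun τ => ¬ LocallyParallel σ τ)).card ≤ (Bad n).card := by
          apply Finset.card_le_card_of_injOn (fun τ => τ⁻¹ * σ)
          · intro τ hτ
            rw [Finset.mem_coe, mem_Bad]
            intro hQ
            exact absurd (lp_of_Q hQ) (Finset.mem_filter.mp hτ).2
          · intro τ₁ _ τ₂ _ h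
            have : τ₁⁻¹ = τ₂⁻¹ := mul_right_cancel h
            exact inv_injective this
        have hcard : (insert σ S').card = S'.card + 1 :=
          Finset.card_insert_of_notMem hσS'
        calc V.card = V'.card + (V.filter (fun τ => ¬ LocallyParallel σ τ)).card := by
              rw [hV']; omega
          _ ≤ (Bad n).card * S'.card + (Bad n).card := by
              exact Nat.add_le_add hS'card hN
          _ = (Bad n).card * (S'.card + 1) := by ring
          _ = (Bad n).card * (insert σ S').card := by rw [hcard]

end LPAux

/-- There is a set of pairwise locally parallel permutations of `[n]` of size at
least `n! / 6 ^ n`. -/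
theorem exists_pairwise_locallyParallel (n : ℕ) (hn : 0 < n) :
    ∃ S : Finset (Equiv.Perm (Fin n)),
      (∀ σ ∈ S, ∀ τ ∈ S, σ ≠ τ → LocallyParallel σ τ) ∧
      Nat.factorial n ≤ 6 ^ n * S.card := by
  classical
  obtain ⟨S, _, hpair, hcard⟩ :=
    LPAux.greedy (n := n) (Finset.univ.card) Finset.univ le_rfl
  refine ⟨S, hpair, ?_⟩
  have h1 : (Finset.univ : Finset (Equiv.Perm (Fin n))).card = Nat.factorial n := by
    rw [Finset.card_univ, Fintype.card_perm, Fintype.card_fin]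
  have h2 : (LPAux.Bad n).card * S.card ≤ 6 ^ n * S.card :=
    Nat.mul_le_mul_right _ LPAux.bad_card
  omega
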